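/- For every nonempty path query q = R1(x1,x2), ..., Rk(xk,x_{k+1}) and constant c, let q_c be the query obtained by replacing x1 with c. Then there exists a first-order sentence ψ_c such that for every database instance db, every repair of db satisfies q_c if and only if db satisfies ψ_c. Concretely, ψ_c can be constructed inductively: for k = 1, ψ_c = ∃y R1(c, y); for k > 1, ψ_c = ∃y R1(c,y) ∧ ∀z (R1(c,z) → φ(z)), where φ(z) is the inductively-constructed rewriting for the tail query starting at z. -/

import Mathlib

open FirstOrder

/-- The first-order language with a constant symbol for every element of `C`
and a binary relation symbol for every relation name in `σ`. -/
def PathLang (σ C : Type) : FirstOrder.Language where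
  Functions n := match n with
    | 0 => C
    | _ + 1 => Empty
  Relations n := match n with
    | 2 => σ
    | 0 => Empty
    | 1 => Empty
    | _ + 3 => Empty

/-- A database instance `db` viewed as a structure for `PathLang σ C`, with
domain `C`: constants are interpreted by themselves and a binary relation `R`
holds of `(x, y)` iff the fact `R(x, y)` is in `db`. -/
def dbStructure {σ C : Type} (db : Finset (σ × C × C)) :
    (PathLang σ C).Structure C where
  funMap {n} := match n with
    | 0 => fun c _ => c
    | _ + 1 => fun e _ => e.elim
  RelMap {n} := match n with
    | 2 => fun R x => (R, x 0, x 1) ∈ db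
    | 0 => fun e _ => e.elim
    | 1 => fun e _ => e.elim
    | _ + 3 => fun e _ => e.elim

/-- `Reaches r c t` : there is a path in the database instance `r`
starting at `c` with trace `t`. -/
inductive Reaches {σ C : Type} (r : Finset (σ × C × C)) : C → List σ → Prop
  | nil (c : C) : Reaches r c []
  | cons {c d : C} {R : σ} {t : List σ} :
      (R, c, d) ∈ r → Reaches r d t → Reaches r c (R :: t)

/-- A database instance is consistent if no two distinct facts are key-equal. -/
def Consistent {σ C : Type} (r : Finset (σ × C × C)) : Prop :=
  ∀ f ∈ r, ∀ g ∈ r, f.1 = g.1 → f.2.1 = g.2.1 → f = g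

/-- A repair of `db` is a maximal consistent subset of `db`. -/
def Repair {σ C : Type} (db r : Finset (σ × C × C)) : Prop :=
  r ⊆ db ∧ Consistent r ∧ ∀ s, r ⊆ s → s ⊆ db → Consistent s → s = r

namespace Stmt17

variable {σ C : Type}

open scoped Classical

/-- A "bad witness": a key-consistent walk in `db` from `c` of some length `i < |q|`
following the trace, ending at a node whose next key is dead in `db`. -/
def Bad (q : List σ) (d : σ) (c : C) (db : Finset (σ × C × C)) : Prop :=
  ∃ i < q.length, ∃ x : ℕ → C, x 0 = c ∧
    (∀ j < i, (q.getD j d, x j, x (j + 1)) ∈ db) ∧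
    (∀ j < i, ∀ l < i, q.getD j d = q.getD l d → x j = x l → x (j + 1) = x (l + 1)) ∧
    (∀ y, (q.getD i d, x i, y) ∉ db)

lemma consistent_mono {s t : Finset (σ × C × C)} (h : s ⊆ t) (ht : Consistent t) :
    Consistent s := fun f hf g hg h1 h2 => ht f (h hf) g (h hg) h1 h2

lemma extend_aux (db : Finset (σ × C × C)) :
    ∀ n (s : Finset (σ × C × C)), (db \ s).card ≤ n → s ⊆ db → Consistent s →
      ∃ r, s ⊆ r ∧ Repair db r := by
  intro n
  induction n with
  | zero =>
    intro s hcard hsub hcons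
    have hdb : db ⊆ s := by
      intro f hf
      by_contra hfs
      have : f ∈ db \ s := Finset.mem_sdiff.2 ⟨hf, hfs⟩
      have := Finset.card_pos.2 ⟨f, this⟩
      omega
    exact ⟨s, subset_rfl, hsub, hcons, fun t hst htdb _ =>
      Finset.Subset.antisymm (htdb.trans hdb) hst⟩
  | succ n ih =>
    intro s hcard hsub hcons
    by_cases h : ∃ f ∈ db, f ∉ s ∧ Consistent (insert f s)
    · obtain ⟨f, hfdb, hfs, hcf⟩ := h
      have hlt : (db \ insert f s).card < (db \ s).card := by
        apply Finset.card_lt_card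
        constructor
        · intro g hg
          rw [Finset.mem_sdiff] at hg ⊢
          exact ⟨hg.1, fun hgs => hg.2 (Finset.mem_insert_of_mem hgs)⟩
        · intro hsubs
          have : f ∈ db \ s := Finset.mem_sdiff.2 ⟨hfdb, hfs⟩
          have := hsubs this
          rw [Finset.mem_sdiff] at this
          exact this.2 (Finset.mem_insert_self f s)
      obtain ⟨r, hr1, hr2⟩ := ih (insert f s) (by omega)
        (Finset.insert_subset hfdb hsub) hcf
      exact ⟨r, (Finset.subset_insert f s).trans hr1, hr2⟩
    · refine ⟨s, subset_rfl, hsub, hcons, fun t hst htdb htc => ?_⟩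
      apply Finset.Subset.antisymm _ hst
      intro f hf
      by_contra hfs
      exact h ⟨f, htdb hf, hfs, consistent_mono
        (Finset.insert_subset hf hst) htc⟩

lemma extend_to_repair {db s : Finset (σ × C × C)} (hsub : s ⊆ db)
    (hcons : Consistent s) : ∃ r, s ⊆ r ∧ Repair db r :=
  extend_aux db (db \ s).card s le_rfl hsub hcons

lemma repair_alive {db r : Finset (σ × C × C)} (hr : Repair db r)
    {R : σ} {a b : C} (hdb : (R, a, b) ∈ db) : ∃ y, (R, a, y) ∈ r := by
  obtain ⟨hsub, hcons, hmax⟩ := hr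
  by_contra h
  push_neg at h
  have hconsI : Consistent (insert (R, a, b) r) := by
    intro f hf g hg h1 h2
    rw [Finset.mem_insert] at hf hg
    rcases hf with hf | hf <;> rcases hg with hg | hg
    · rw [hf, hg]
    · exfalso
      obtain ⟨gR, ga, gb⟩ := g
      subst hf
      simp only at h1 h2
      rw [← h1, ← h2] at hg
      exact h gb hg
    · exfalso
      obtain ⟨fR, fa, fb⟩ := f
      subst hg
      simp only at h1 h2
      rw [h1, h2] at hf
      exact h fb hf
    · exact hcons f hf g hg h1 h2
  have := hmax (insert (R, a, b) r) (Finset.subset_insert _ _)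
    (Finset.insert_subset hdb hsub) hconsI
  exact h b (this ▸ Finset.mem_insert_self _ _)

lemma reaches_of_walk {r : Finset (σ × C × C)} (d : σ) :
    ∀ (t : List σ) (x : ℕ → C),
      (∀ j < t.length, (t.getD j d, x j, x (j + 1)) ∈ r) → Reaches r (x 0) t := by
  intro t
  induction t with
  | nil => intro x _; exact Reaches.nil _
  | cons R t ih =>
    intro x h
    refine Reaches.cons (d := x 1) ?_ (ih (fun j => x (j + 1)) ?_)
    · have := h 0 (by simp)
      simpa using this
    · intro j hj
      have := h (j + 1) (by simpa using Nat.succ_lt_succ hj)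
      simpa using this

/-- If `Bad`, then some repair does not reach. -/
lemma bad_not_certain {q : List σ} {d : σ} {c : C} {db : Finset (σ × C × C)}
    (hbad : Bad q d c db) : ∃ r, Repair db r ∧ ¬ Reaches r c q := by
  obtain ⟨i, hik, x, hx0, hwalk, hkc, hdead⟩ := hbad
  set E : Finset (σ × C × C) :=
    (Finset.range i).image (fun j => (q.getD j d, x j, x (j + 1))) with hE
  have hEdb : E ⊆ db := by
    intro f hf
    rw [hE, Finset.mem_image] at hf
    obtain ⟨j, hj, rfl⟩ := hf
    exact hwalk j (Finset.mem_range.1 hj)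
  have hEcons : Consistent E := by
    intro f hf g hg h1 h2
    rw [hE, Finset.mem_image] at hf hg
    obtain ⟨j, hj, rfl⟩ := hf
    obtain ⟨l, hl, rfl⟩ := hg
    simp only at h1 h2
    have := hkc j (Finset.mem_range.1 hj) l (Finset.mem_range.1 hl) h1 h2
    rw [h1, h2, this]
  obtain ⟨r, hEr, hrep⟩ := extend_to_repair hEdb hEcons
  refine ⟨r, hrep, fun hreach => ?_⟩
  have forced : ∀ j, j ≤ i → Reaches r (x j) (q.drop j) := by
    intro j
    induction j with
    | zero => intro _; rw [hx0]; simpa using hreach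
    | succ j ihj =>
      intro hji
      have hj : j < i := hji
      have hji' : j ≤ i := Nat.le_of_lt hj
      have hjq : j < q.length := lt_of_lt_of_le hj (Nat.le_of_lt hik)
      have hdrop : q.drop j = q.getD j d :: q.drop (j + 1) := by
        rw [List.getD_eq_getElem _ _ hjq]
        exact List.drop_eq_getElem_cons hjq
      have := ihj hji'
      rw [hdrop] at this
      cases this with
      | @cons _ dd _ _ hfact htail =>
        have hjE : (q.getD j d, x j, x (j + 1)) ∈ r :=
          hEr (by rw [hE, Finset.mem_image]; exact ⟨j, Finset.mem_range.2 hj, rfl⟩)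
        have heq := hrep.2.1 _ hfact _ hjE rfl rfl
        have : dd = x (j + 1) := congrArg (fun p => p.2.2) heq
        rwa [← this]
  have := forced i le_rfl
  have hdrop : q.drop i = q.getD i d :: q.drop (i + 1) := by
    rw [List.getD_eq_getElem _ _ hik]
    exact List.drop_eq_getElem_cons hik
  rw [hdrop] at this
  cases this with
  | cons hfact _ => exact hdead _ (hrep.1 hfact)

/-- If not `Bad`, every repair reaches. -/
lemma not_bad_certain {q : List σ} {d : σ} {c : C} {db : Finset (σ × C × C)}
    (hbad : ¬ Bad q d c db) : ∀ r, Repair db r → Reaches r c q := by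
  intro r hrep
  have key : ∀ i, i ≤ q.length →
      ∃ x : ℕ → C, x 0 = c ∧ ∀ j < i, (q.getD j d, x j, x (j + 1)) ∈ r := by
    intro i
    induction i with
    | zero => exact fun _ => ⟨fun _ => c, rfl, fun j hj => absurd hj (Nat.not_lt_zero j)⟩
    | succ i ihi =>
      intro hik
      obtain ⟨x, hx0, hw⟩ := ihi (Nat.le_of_succ_le hik)
      have alive : ∃ y, (q.getD i d, x i, y) ∈ db := by
        by_contra hdead
        push_neg at hdead
        exact hbad ⟨i, hik, x, hx0, fun j hj => hrep.1 (hw j hj),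
          fun j hj l hl h1 h2 => by
            have := hrep.2.1 _ (hw j hj) _ (hw l hl) (by simpa using h1) (by simpa using h2)
            exact congrArg (fun p => p.2.2) this,
          fun y hy => hdead y hy⟩
      obtain ⟨y, hy⟩ := alive
      obtain ⟨y', hy'⟩ := repair_alive hrep hy
      refine ⟨fun j => if j = i + 1 then y' else x j, by simp [hx0], ?_⟩
      intro j hj
      rcases Nat.lt_succ_iff_lt_or_eq.1 hj with hj' | rfl
      · have h1 : j ≠ i + 1 := by omega
        have h2 : j + 1 ≠ i + 1 := by omega
        simp only [h1, h2, if_false]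
        exact hw j hj'
      · have h1 : j ≠ j + 1 := by omega
        simp only [h1, if_false, if_pos rfl]
        exact hy'
  obtain ⟨x, hx0, hw⟩ := key q.length le_rfl
  have := reaches_of_walk d q x hw
  rwa [hx0] at this

theorem certain_iff_not_bad (q : List σ) (d : σ) (c : C) (db : Finset (σ × C × C)) :
    (∀ r, Repair db r → Reaches r c q) ↔ ¬ Bad q d c db := by
  constructor
  · intro h hbad
    obtain ⟨r, hr, hnr⟩ := bad_not_certain hbad
    exact hnr (h r hr)
  · exact not_bad_certain

end Stmt17

namespace Stmt17

open FirstOrder Language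

variable {σ C : Type}

open scoped Classical

noncomputable section

def fIInf {L : Language} {α β : Type*} {n : ℕ} (s : Finset β)
    (f : β → L.BoundedFormula α n) : L.BoundedFormula α n :=
  (s.toList.map f).foldr (· ⊓ ·) ⊤

/-- Term for the `j`-th node of the walk: `j = 0` is the constant `c`,
otherwise variable `j - 1`. -/
def wtm (c : C) (k j : ℕ) : (PathLang σ C).Term (Empty ⊕ Fin k) :=
  if h : 0 < j ∧ j - 1 < k then Term.var (Sum.inr ⟨j - 1, h.2⟩)
  else Constants.term (show (PathLang σ C).Constants from c)

/-- Semantic counterpart of `wtm`. -/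
def nodeOf (c : C) {k : ℕ} (xs : Fin k → C) (j : ℕ) : C :=
  if h : 0 < j ∧ j - 1 < k then xs ⟨j - 1, h.2⟩ else c

def edgeF (c : C) (k : ℕ) (R : σ) (a b : ℕ) : (PathLang σ C).BoundedFormula Empty k :=
  Relations.boundedFormula₂ (show (PathLang σ C).Relations 2 from R) (wtm c k a) (wtm c k b)

def walkF (q : List σ) (d : σ) (c : C) (k i : ℕ) : (PathLang σ C).BoundedFormula Empty k :=
  fIInf (Finset.range i) fun j => edgeF c k (q.getD j d) j (j + 1)

def consF (q : List σ) (d : σ) (c : C) (k i : ℕ) : (PathLang σ C).BoundedFormula Empty k :=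
  fIInf (Finset.range i ×ˢ Finset.range i) fun p =>
    if q.getD p.1 d = q.getD p.2 d then
      (Term.bdEqual (wtm c k p.1) (wtm c k p.2)).imp
        (Term.bdEqual (wtm c k (p.1 + 1)) (wtm c k (p.2 + 1)))
    else ⊤

def deadF (q : List σ) (d : σ) (c : C) (k i : ℕ) : (PathLang σ C).BoundedFormula Empty k :=
  BoundedFormula.all (BoundedFormula.not
    (Relations.boundedFormula₂ (show (PathLang σ C).Relations 2 from q.getD i d)
      (wtm c (k + 1) i) (Term.var (Sum.inr (Fin.last k)))))

def chiF (q : List σ) (d : σ) (c : C) (k i : ℕ) : (PathLang σ C).Sentence :=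
  BoundedFormula.exs (walkF q d c k i ⊓ consF q d c k i ⊓ deadF q d c k i)

def psiF (q : List σ) (d : σ) (c : C) : (PathLang σ C).Sentence :=
  fIInf (Finset.range q.length) fun i =>
    BoundedFormula.not (chiF q d c q.length i)

end

lemma realize_fIInf {L : Language} {M : Type*} [L.Structure M] {α β : Type*} {n : ℕ}
    (s : Finset β) (f : β → L.BoundedFormula α n) (v : α → M) (v' : Fin n → M) :
    (fIInf s f).Realize v v' ↔ ∀ b ∈ s, (f b).Realize v v' := by
  simp only [fIInf, BoundedFormula.realize_foldr_inf, List.mem_map, Finset.mem_toList,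
    forall_exists_index, and_imp, forall_apply_eq_imp_iff₂]

lemma realize_wtm {db : Finset (σ × C × C)} (c : C) {k : ℕ} (v : Empty → C)
    (xs : Fin k → C) (j : ℕ) :
    @Term.realize (PathLang σ C) C (dbStructure db) _ (Sum.elim v xs) (wtm c k j) =
      nodeOf c xs j := by
  unfold wtm nodeOf
  split <;> rfl

lemma realize_edgeF {db : Finset (σ × C × C)} (c : C) {k : ℕ} (R : σ) (a b : ℕ)
    (v : Empty → C) (xs : Fin k → C) :
    @BoundedFormula.Realize (PathLang σ C) C (dbStructure db) Empty k
        (edgeF c k R a b) v xs ↔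
      (R, nodeOf c xs a, nodeOf c xs b) ∈ db := by
  letI := dbStructure db
  rw [edgeF, BoundedFormula.realize_rel₂, realize_wtm, realize_wtm]
  rfl

lemma nodeOf_snoc (c : C) {k : ℕ} (xs : Fin k → C) (y : C) {i : ℕ} (hik : i ≤ k) :
    nodeOf c (Fin.snoc xs y) i = nodeOf c xs i := by
  unfold nodeOf
  rcases Nat.eq_zero_or_pos i with rfl | hi
  · simp
  · have h1 : i - 1 < k := by omega
    have h2 : i - 1 < k + 1 := by omega
    rw [dif_pos ⟨hi, h2⟩, dif_pos ⟨hi, h1⟩]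
    have : (⟨i - 1, h2⟩ : Fin (k + 1)) = Fin.castSucc ⟨i - 1, h1⟩ := rfl
    rw [this, Fin.snoc_castSucc]

lemma realize_deadF {db : Finset (σ × C × C)} (q : List σ) (d : σ) (c : C) {k : ℕ}
    (i : ℕ) (hik : i ≤ k) (v : Empty → C) (xs : Fin k → C) :
    @BoundedFormula.Realize (PathLang σ C) C (dbStructure db) Empty k
        (deadF q d c k i) v xs ↔
      ∀ y, (q.getD i d, nodeOf c xs i, y) ∉ db := by
  letI := dbStructure db
  rw [deadF, BoundedFormula.realize_all]
  refine forall_congr' fun y => ?_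
  rw [BoundedFormula.realize_not, BoundedFormula.realize_rel₂, realize_wtm]
  have hy : @Term.realize (PathLang σ C) C (dbStructure db) _
      (Sum.elim v (Fin.snoc xs y)) (Term.var (Sum.inr (Fin.last k))) = y := by
    simp [Term.realize]
  rw [hy, nodeOf_snoc c xs y hik]
  rfl

lemma realize_chiF {db : Finset (σ × C × C)} (q : List σ) (d : σ) (c : C) {k : ℕ}
    (i : ℕ) (hik : i ≤ k) :
    @Sentence.Realize (PathLang σ C) C (dbStructure db) (chiF q d c k i) ↔
      ∃ xs : Fin k → C,
        (∀ j < i, (q.getD j d, nodeOf c xs j, nodeOf c xs (j + 1)) ∈ db) ∧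
        (∀ j < i, ∀ l < i, q.getD j d = q.getD l d →
          nodeOf c xs j = nodeOf c xs l → nodeOf c xs (j + 1) = nodeOf c xs (l + 1)) ∧
        (∀ y, (q.getD i d, nodeOf c xs i, y) ∉ db) := by
  letI := dbStructure db
  rw [Sentence.Realize, chiF, BoundedFormula.realize_exs]
  refine exists_congr fun xs => ?_
  rw [BoundedFormula.realize_inf, BoundedFormula.realize_inf]
  rw [realize_deadF q d c i hik]
  constructor
  · rintro ⟨⟨hw, hc⟩, hd⟩
    refine ⟨fun j hj => ?_, fun j hj l hl h1 h2 => ?_, hd⟩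
    · have := (realize_fIInf _ _ _ _).1 hw j (Finset.mem_range.2 hj)
      rwa [realize_edgeF] at this
    · have := (realize_fIInf _ _ _ _).1 hc (j, l)
        (Finset.mem_product.2 ⟨Finset.mem_range.2 hj, Finset.mem_range.2 hl⟩)
      rw [if_pos h1] at this
      have := (BoundedFormula.realize_imp).1 this
      rw [BoundedFormula.realize_bdEqual, BoundedFormula.realize_bdEqual,
        realize_wtm, realize_wtm, realize_wtm, realize_wtm] at this
      exact this h2
  · rintro ⟨hw, hc, hd⟩
    refine ⟨⟨(realize_fIInf _ _ _ _).2 fun j hj => ?_,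
      (realize_fIInf _ _ _ _).2 fun p hp => ?_⟩, hd⟩
    · rw [realize_edgeF]
      exact hw j (Finset.mem_range.1 hj)
    · obtain ⟨hp1, hp2⟩ := Finset.mem_product.1 hp
      by_cases h : q.getD p.1 d = q.getD p.2 d
      · rw [if_pos h, BoundedFormula.realize_imp, BoundedFormula.realize_bdEqual,
          BoundedFormula.realize_bdEqual, realize_wtm, realize_wtm, realize_wtm,
          realize_wtm]
        exact hc p.1 (Finset.mem_range.1 hp1) p.2 (Finset.mem_range.1 hp2) h
      · rw [if_neg h]
        exact BoundedFormula.realize_top.2 trivial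

lemma nodeOf_eq {c : C} {k : ℕ} {x : ℕ → C} (hx0 : x 0 = c) {j : ℕ} (hj : j ≤ k) :
    nodeOf c (fun m : Fin k => x (m + 1)) j = x j := by
  unfold nodeOf
  rcases Nat.eq_zero_or_pos j with rfl | hjpos
  · simp [hx0.symm]
  · have h1 : j - 1 < k := by omega
    rw [dif_pos ⟨hjpos, h1⟩]
    show x (j - 1 + 1) = x j
    congr 1
    omega

lemma realize_psiF (q : List σ) (d : σ) (c : C) (db : Finset (σ × C × C)) :
    @Sentence.Realize (PathLang σ C) C (dbStructure db) (psiF q d c) ↔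
      ¬ Bad q d c db := by
  letI := dbStructure db
  rw [Sentence.Realize, psiF, Formula.Realize, realize_fIInf]
  rw [Bad]
  push_neg
  constructor
  · intro h i hik x hx0 hw hc
    by_contra hd
    push_neg at hd
    have hni := h i (Finset.mem_range.2 hik)
    rw [BoundedFormula.realize_not] at hni
    apply hni
    have : @Sentence.Realize (PathLang σ C) C (dbStructure db)
        (chiF q d c q.length i) := by
      rw [realize_chiF q d c i (Nat.le_of_lt hik)]
      refine ⟨fun m : Fin q.length => x (m + 1), ?_, ?_, ?_⟩
      · intro j hj
        rw [nodeOf_eq hx0 (by omega), nodeOf_eq hx0 (by omega)]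
        exact hw j hj
      · intro j hj l hl h1 h2
        rw [nodeOf_eq hx0 (by omega), nodeOf_eq hx0 (by omega)]
        rw [nodeOf_eq hx0 (by omega), nodeOf_eq hx0 (by omega)] at h2
        exact hc j hj l hl h1 h2
      · intro y
        rw [nodeOf_eq hx0 (by omega)]
        exact hd y
    exact this
  · intro h i hi
    rw [BoundedFormula.realize_not]
    intro hreal
    have hik : i < q.length := Finset.mem_range.1 hi
    have : @Sentence.Realize (PathLang σ C) C (dbStructure db)
        (chiF q d c q.length i) := hreal
    rw [realize_chiF q d c i (Nat.le_of_lt hik)] at this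
    obtain ⟨xs, hw, hc, hd⟩ := this
    obtain ⟨y, hy⟩ := h i hik (nodeOf c xs) (by simp [nodeOf]) hw hc
    exact hd y hy

theorem main (q : List σ) (hq : q ≠ []) (c : C) :
    ∃ ψ : (PathLang σ C).Sentence,
      ∀ db : Finset (σ × C × C),
        ((∀ r, Repair db r → Reaches r c q) ↔
          @FirstOrder.Language.Sentence.Realize (PathLang σ C) C
            (dbStructure db) ψ) := by
  refine ⟨psiF q (q.head hq) c, fun db => ?_⟩
  rw [realize_psiF, certain_iff_not_bad q (q.head hq) c db]

end Stmt17


/-- For every nonempty path query `q = R1 ... Rk` (a word over relation names)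
and constant `c`, there is a first-order sentence `ψ_c` (over the language with
constants `C` and binary relations `σ`) such that for every database instance
`db`: every repair of `db` satisfies `q_c` (i.e. contains a path starting at
`c` with trace `q`) iff `db` satisfies `ψ_c`. -/
theorem stmt_17 {σ C : Type} (q : List σ) (hq : q ≠ []) (c : C) :
    ∃ ψ : (PathLang σ C).Sentence,
      ∀ db : Finset (σ × C × C),
        ((∀ r, Repair db r → Reaches r c q) ↔
          @FirstOrder.Language.Sentence.Realize (PathLang σ C) C
            (dbStructure db) ψ) :=
  Stmt17.main q hq c
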